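/- arXiv:2312.15781 — 5 statements merged into one kernel-verified Lean document; each statement's English description precedes it below -/
import Mathlib

section
/- Let S be a symmetric positive semidefinite p×p real matrix. Then the type-II ridge estimator tends to the zero matrix as λ → ∞: lim_{λ→∞} [(λI + (1/4)S²)^{1/2} + (1/2)S]⁻¹ = 0. -/
open Matrix Filter

private lemma quad_lower_bound {p : ℕ} {F : Matrix (Fin p) (Fin p) ℝ} {c : ℝ}
    (hF : F.PosDef) (hc : 0 ≤ c)
    (hq : ∀ x : Fin p → ℝ, c ^ 2 * (x ⬝ᵥ x) ≤ x ⬝ᵥ (F ^ 2 *ᵥ x)) :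
    (F - c • 1).PosSemidef := by
  have hH : (F - c • (1 : Matrix (Fin p) (Fin p) ℝ)).IsHermitian := by
    apply hF.1.sub
    simp [Matrix.IsHermitian, Matrix.conjTranspose_smul]
  apply hH.posSemidef_iff_eigenvalues_nonneg.mpr
  intro i
  set μ := hH.eigenvalues i with hμ
  set v : Fin p → ℝ := ⇑(hH.eigenvectorBasis i) with hv
  have hev : (F - c • 1) *ᵥ v = μ • v := hH.mulVec_eigenvectorBasis i
  have hvne : v ≠ 0 := by
    have h := (hH.eigenvectorBasis).orthonormal.ne_zero i
    exact fun hz => h (by ext k; exact congrFun hz k)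
  have hvv : 0 < v ⬝ᵥ v := by
    rcases lt_or_eq_of_le (by simpa using dotProduct_star_self_nonneg v) with h | h
    · exact h
    · exact absurd (dotProduct_self_eq_zero.mp h.symm) hvne
  have hFv : F *ᵥ v = (μ + c) • v := by
    have : F *ᵥ v - c • v = μ • v := by
      simpa [Matrix.sub_mulVec, Matrix.smul_mulVec, Matrix.one_mulVec] using hev
    have h2 : F *ᵥ v = μ • v + c • v := by rw [← this]; abel
    rw [h2, ← add_smul, add_comm μ c, add_comm c μ]
  have hμc : 0 < μ + c := by
    have hpos : 0 < v ⬝ᵥ (F *ᵥ v) := by simpa using hF.dotProduct_mulVec_pos hvne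
    rw [hFv, dotProduct_smul, smul_eq_mul] at hpos
    nlinarith [hvv]
  have hF2v : F ^ 2 *ᵥ v = ((μ + c) ^ 2) • v := by
    rw [pow_two, ← Matrix.mulVec_mulVec, hFv, Matrix.mulVec_smul, hFv, smul_smul, ← pow_two]
  have hkey := hq v
  rw [hF2v, dotProduct_smul, smul_eq_mul] at hkey
  have h2 : c ^ 2 ≤ (μ + c) ^ 2 := by
    have := hvv
    nlinarith [hkey]
  change 0 ≤ μ
  nlinarith [h2, hμc, hc]

private lemma inv_entry_bound {p : ℕ} {M : Matrix (Fin p) (Fin p) ℝ} {c : ℝ}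
    (hM : M.PosDef) (hc : 0 < c)
    (hq : ∀ x : Fin p → ℝ, c * (x ⬝ᵥ x) ≤ x ⬝ᵥ (M *ᵥ x)) (i j : Fin p) :
    |M⁻¹ i j| ≤ 1 / c := by
  set N := M⁻¹ with hNdef
  have hN : N.PosDef := hM.inv
  have hMN : M * N = 1 :=
    Matrix.mul_nonsing_inv M (isUnit_iff_ne_zero.mpr hM.det_pos.ne')
  have diag : ∀ k, 0 ≤ N k k ∧ N k k ≤ 1 / c := by
    intro k
    set x : Fin p → ℝ := Pi.single k 1 with hx
    set y := N *ᵥ x with hy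
    have hMy : M *ᵥ y = x := by rw [hy, Matrix.mulVec_mulVec, hMN, Matrix.one_mulVec]
    have hyk : y k = N k k := by simp [hy, hx, Matrix.mulVec_single]
    have h1 : c * (y ⬝ᵥ y) ≤ y k := by
      have h := hq y
      rw [hMy] at h
      simpa [hx, dotProduct_single] using h
    have h3 : (y k) ^ 2 ≤ y ⬝ᵥ y := by
      have : y ⬝ᵥ y = ∑ m, y m * y m := rfl
      rw [this, pow_two]
      exact Finset.single_le_sum (fun m _ => mul_self_nonneg (y m)) (Finset.mem_univ k)
    have h0 : 0 ≤ y k := by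
      have h := hN.posSemidef.dotProduct_mulVec_nonneg x
      simpa [hx, ← hy, single_dotProduct, hyk] using h
    constructor
    · rw [← hyk]; exact h0
    · rw [← hyk]
      rcases eq_or_lt_of_le h0 with h | h
      · rw [← h]; positivity
      · have hyy : c * y k ^ 2 ≤ y k :=
          le_trans (mul_le_mul_of_nonneg_left h3 hc.le) h1
        rw [le_div_iff₀ hc]
        nlinarith [hyy, h]
  have hsym : N j i = N i j := by
    have h := hN.isHermitian
    have := congrFun (congrFun h j) i
    simpa [Matrix.conjTranspose_apply] using this.symm
  have quad : ∀ e : ℝ, 0 ≤ N i i + e * (N i j + N j i) + e ^ 2 * N j j := by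
    intro e
    have h := hN.posSemidef.dotProduct_mulVec_nonneg (Pi.single i 1 + Pi.single j e : Fin p → ℝ)
    simp only [star_trivial, Matrix.mulVec_add, dotProduct_add,
      add_dotProduct, single_dotProduct, Matrix.mulVec_single,
      Pi.smul_apply, Matrix.col_apply, op_smul_eq_mul] at h
    ring_nf at h ⊢
    linarith [h]
  have q1 := quad 1
  have q2 := quad (-1)
  have hii := diag i
  have hjj := diag j
  rw [abs_le]
  constructor
  · nlinarith [q2, hsym, hii.2, hjj.2, hc]
  · nlinarith [q1, hsym, hii.2, hjj.2, hc]

/-- For S symmetric PSD, the type-II ridge estimator tends to the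
zero matrix as λ → ∞. Here `f l` denotes the (unique) symmetric positive
definite square root of λI + (1/4)S². -/
theorem stmt6 (p : ℕ) (S : Matrix (Fin p) (Fin p) ℝ) (hS : S.PosSemidef)
    (f : ℝ → Matrix (Fin p) (Fin p) ℝ)
    (hf : ∀ l, 0 < l → (f l).PosDef ∧
      (f l) ^ 2 = l • (1 : Matrix (Fin p) (Fin p) ℝ) + (1/4 : ℝ) • S ^ 2) :
    Tendsto (fun l : ℝ => (f l + (1/2 : ℝ) • S)⁻¹)
      atTop (nhds (0 : Matrix (Fin p) (Fin p) ℝ)) := by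
  have hsqrt : Tendsto (fun l : ℝ => (Real.sqrt l)⁻¹) atTop (nhds 0) := by
    apply Filter.Tendsto.inv_tendsto_atTop
    apply tendsto_atTop_atTop.mpr
    intro b
    refine ⟨(max b 0) ^ 2, fun a ha => le_trans (le_max_left b 0) ?_⟩
    rw [← Real.sqrt_sq (le_max_right b 0)]
    exact Real.sqrt_le_sqrt ha
  refine tendsto_pi_nhds.mpr ?_
  intro i
  rw [tendsto_pi_nhds]
  intro j
  simp only [Pi.zero_apply, Matrix.zero_apply]
  apply squeeze_zero_norm' _ hsqrt
  filter_upwards [eventually_gt_atTop (0 : ℝ)] with l hl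
  obtain ⟨hPD, hsq⟩ := hf l hl
  have hslpos : 0 < Real.sqrt l := Real.sqrt_pos.mpr hl
  have hhalf : ((1/2 : ℝ) • S).PosSemidef := by
    refine PosSemidef.of_dotProduct_mulVec_nonneg ?_ fun x => ?_
    · have hT : Sᵀ = S := Matrix.IsSymm.eq (by simpa using hS.1)
      simp [Matrix.IsHermitian, Matrix.conjTranspose_smul, hT]
    · have h := hS.dotProduct_mulVec_nonneg x
      rw [Matrix.smul_mulVec, dotProduct_smul]
      exact smul_nonneg (by norm_num) h
  have hM : (f l + (1/2 : ℝ) • S).PosDef := hPD.add_posSemidef hhalf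
  have hquadF : ∀ x : Fin p → ℝ,
      (Real.sqrt l) ^ 2 * (x ⬝ᵥ x) ≤ x ⬝ᵥ ((f l) ^ 2 *ᵥ x) := by
    intro x
    rw [hsq, Matrix.add_mulVec, dotProduct_add, Matrix.smul_mulVec,
      Matrix.smul_mulVec, Matrix.one_mulVec, dotProduct_smul,
      dotProduct_smul, Real.sq_sqrt hl.le]
    have hS2 : 0 ≤ x ⬝ᵥ (S ^ 2 *ᵥ x) := by
      have h := (hS.pow 2).dotProduct_mulVec_nonneg x
      simpa using h
    have : (0:ℝ) ≤ (1/4 : ℝ) • (x ⬝ᵥ (S ^ 2 *ᵥ x)) := by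
      rw [smul_eq_mul]; positivity
    rw [smul_eq_mul]
    linarith [this]
  have hg : ((f l) - Real.sqrt l • 1).PosSemidef :=
    quad_lower_bound hPD hslpos.le hquadF
  have hquadM : ∀ x : Fin p → ℝ,
      Real.sqrt l * (x ⬝ᵥ x) ≤ x ⬝ᵥ ((f l + (1/2 : ℝ) • S) *ᵥ x) := by
    intro x
    have h1 : 0 ≤ x ⬝ᵥ (((1/2 : ℝ) • S) *ᵥ x) := by simpa using hhalf.dotProduct_mulVec_nonneg x
    have h2 : Real.sqrt l * (x ⬝ᵥ x) ≤ x ⬝ᵥ (f l *ᵥ x) := by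
      have h := hg.dotProduct_mulVec_nonneg x
      simp only [star_trivial, Matrix.sub_mulVec, dotProduct_sub,
        Matrix.smul_mulVec, Matrix.one_mulVec, dotProduct_smul,
        smul_eq_mul] at h
      linarith
    rw [Matrix.add_mulVec, dotProduct_add]
    linarith
  have hbound := inv_entry_bound hM hslpos hquadM i j
  simpa [Real.norm_eq_abs, one_div] using hbound
end

section
/- Let T be a symmetric positive definite p×p real matrix and S symmetric positive semidefinite, with S and T commuting. Then the type-I ridge estimator converges to the target as λ → ∞: lim_{λ→∞} [(λI + (1/4)(S − λT)²)^{1/2} + (1/2)(S − λT)]⁻¹ = T. -/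
open Matrix Filter

variable {p : ℕ}

lemma myPosSemidef_smul {M : Matrix (Fin p) (Fin p) ℝ} (hM : M.PosSemidef) {c : ℝ}
    (hc : 0 ≤ c) : (c • M).PosSemidef := by
  refine Matrix.PosSemidef.of_dotProduct_mulVec_nonneg ?_ fun x => ?_
  · unfold Matrix.IsHermitian
    rw [conjTranspose_smul, hM.1]
    simp
  · rw [smul_mulVec, dotProduct_smul, smul_eq_mul]
    exact mul_nonneg hc (hM.dotProduct_mulVec_nonneg x)

lemma myPosDef_smul {M : Matrix (Fin p) (Fin p) ℝ} (hM : M.PosDef) {c : ℝ}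
    (hc : 0 < c) : (c • M).PosDef := by
  refine Matrix.PosDef.of_dotProduct_mulVec_pos ?_ fun x hx => ?_
  · unfold Matrix.IsHermitian
    rw [conjTranspose_smul, hM.1]
    simp
  · rw [smul_mulVec, dotProduct_smul, smul_eq_mul]
    exact mul_pos hc (hM.dotProduct_mulVec_pos hx)

/-- Sylvester trick: a positive definite matrix commutes with anything commuting
with its square. -/
lemma commute_of_sq_commute {F X : Matrix (Fin p) (Fin p) ℝ}
    (hF : F.PosDef) (h : X * F ^ 2 = F ^ 2 * X) : F * X = X * F := by
  set K := F * X - X * F with hKdef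
  have hK : F * K + K * F = 0 := by
    have : F * K + K * F = F ^ 2 * X - X * F ^ 2 := by rw [hKdef]; noncomm_ring
    rw [this, ← h, sub_self]
  set U : Matrix (Fin p) (Fin p) ℝ := (hF.1.eigenvectorUnitary : Matrix (Fin p) (Fin p) ℝ) with hU
  have h1 : U * star U = 1 := (Matrix.mem_unitaryGroup_iff).mp hF.1.eigenvectorUnitary.2
  have h2 : star U * U = 1 := (Matrix.mem_unitaryGroup_iff').mp hF.1.eigenvectorUnitary.2
  set d : Fin p → ℝ := RCLike.ofReal ∘ hF.1.eigenvalues with hd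
  have hspec : star U * F * U = Matrix.diagonal d := by
    have := hF.1.conjStarAlgAut_star_eigenvectorUnitary
    rw [Unitary.conjStarAlgAut_star_apply] at this
    exact this
  set M : Matrix (Fin p) (Fin p) ℝ := star U * K * U with hM
  have key : Matrix.diagonal d * M + M * Matrix.diagonal d = 0 := by
    have e1 : Matrix.diagonal d * M = star U * (F * K) * U := by
      rw [← hspec, hM]
      calc (star U * F * U) * (star U * K * U)
          = star U * F * (U * star U) * K * U := by noncomm_ring
        _ = star U * (F * K) * U := by rw [h1]; noncomm_ring
    have e2 : M * Matrix.diagonal d = star U * (K * F) * U := by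
      rw [← hspec, hM]
      calc (star U * K * U) * (star U * F * U)
          = star U * K * (U * star U) * F * U := by noncomm_ring
        _ = star U * (K * F) * U := by rw [h1]; noncomm_ring
    rw [e1, e2]
    have : star U * (F * K) * U + star U * (K * F) * U
        = star U * (F * K + K * F) * U := by noncomm_ring
    rw [this, hK]
    simp
  have hMzero : M = 0 := by
    ext i j
    have := congrFun (congrFun key i) j
    simp only [Matrix.add_apply, Matrix.diagonal_mul, Matrix.mul_diagonal,
      Matrix.zero_apply] at this
    have hdi : 0 < d i := by
      simpa [hd] using hF.eigenvalues_pos i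
    have hdj : 0 < d j := by
      simpa [hd] using hF.eigenvalues_pos j
    have : (d i + d j) * M i j = 0 := by linarith [this]
    have := mul_eq_zero.mp this
    rcases this with h' | h'
    · linarith
    · exact h'
  have hKzero : K = 0 := by
    have : U * M * star U = K := by
      rw [hM]
      calc U * (star U * K * U) * star U = (U * star U) * K * (U * star U) := by noncomm_ring
        _ = K := by rw [h1]; noncomm_ring
    rw [← this, hMzero, Matrix.mul_zero, Matrix.zero_mul]
  rw [hKdef] at hKzero
  exact sub_eq_zero.mp hKzero

lemma psd_diag_nonneg {P : Matrix (Fin p) (Fin p) ℝ} (hP : P.PosSemidef) (i : Fin p) :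
    0 ≤ P i i := by
  simpa using hP.dotProduct_mulVec_nonneg (Pi.single i 1)

lemma psd_entry_bound {P : Matrix (Fin p) (Fin p) ℝ} (hP : P.PosSemidef) {m : ℝ}
    (hm : ∀ i, P i i ≤ m) (i j : Fin p) : |P i j| ≤ m := by
  have hsym : ∀ a b : Fin p, P b a = P a b := by
    intro a b
    have := congrFun (congrFun hP.1 a) b
    simpa [Matrix.conjTranspose_apply] using this
  rcases eq_or_ne i j with rfl | hij
  · rw [abs_of_nonneg (psd_diag_nonneg hP i)]; exact hm i
  · have quad : ∀ ε : ℝ, 0 ≤ P i i + ε * P i j + (ε * P i j + ε * ε * P j j) := by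
      intro ε
      set x : Fin p → ℝ := (Pi.single i 1 : Fin p → ℝ) + ε • (Pi.single j 1 : Fin p → ℝ) with hx
      have h0 := hP.dotProduct_mulVec_nonneg x
      have hstar : star x = x := by simp [star_trivial]
      rw [hstar, hx] at h0
      rw [Matrix.mulVec_add, Matrix.mulVec_smul, dotProduct_add, add_dotProduct,
        add_dotProduct, dotProduct_smul, dotProduct_smul, smul_dotProduct,
        smul_dotProduct] at h0
      simp only [Matrix.mulVec_single, single_dotProduct, smul_eq_mul, mul_one,
        one_mul, dotProduct_single] at h0
      refine le_of_le_of_eq h0 ?_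
      simp [Pi.single_apply, hij, (Ne.symm hij), hsym j i]
      ring
    have h1 := quad 1
    have h2 := quad (-1)
    have hii := hm i
    have hjj := hm j
    rw [abs_le]
    constructor <;> nlinarith [hP.dotProduct_mulVec_nonneg (Pi.single i 1), hP.dotProduct_mulVec_nonneg (Pi.single j 1)]

lemma exists_psd_sub_smul_one {A : Matrix (Fin p) (Fin p) ℝ} (hA : A.PosDef) (hp : 0 < p) :
    ∃ c : ℝ, 0 < c ∧ (A - c • (1 : Matrix (Fin p) (Fin p) ℝ)).PosSemidef := by
  haveI : Nonempty (Fin p) := Fin.pos_iff_nonempty.mp hp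
  set ev := hA.1.eigenvalues with hev
  obtain ⟨i0, -, hmin⟩ := Finset.exists_min_image Finset.univ ev ⟨Classical.arbitrary (Fin p),
    Finset.mem_univ _⟩
  refine ⟨ev i0, hA.eigenvalues_pos i0, ?_⟩
  set U : Matrix (Fin p) (Fin p) ℝ := (hA.1.eigenvectorUnitary : Matrix (Fin p) (Fin p) ℝ)
  have h1 : U * star U = 1 := (Matrix.mem_unitaryGroup_iff).mp hA.1.eigenvectorUnitary.2
  set d : Fin p → ℝ := RCLike.ofReal ∘ ev with hd
  have hspec : A = U * Matrix.diagonal d * star U := by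
    have := hA.1.spectral_theorem
    rw [Unitary.conjStarAlgAut_apply] at this
    exact this
  have key : A - ev i0 • (1 : Matrix (Fin p) (Fin p) ℝ)
      = U * Matrix.diagonal (fun i => d i - ev i0) * star U := by
    have hone : (ev i0) • (1 : Matrix (Fin p) (Fin p) ℝ)
        = U * Matrix.diagonal (fun _ => ev i0) * star U := by
      simp only [Matrix.smul_one_eq_diagonal]
      simp only [← Matrix.smul_one_eq_diagonal]
      rw [Matrix.mul_smul, Matrix.smul_mul, Matrix.mul_one, h1]
    rw [hspec, hone]
    rw [← Matrix.sub_mul, ← Matrix.mul_sub, Matrix.diagonal_sub]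
  rw [key]
  have hdiag : (Matrix.diagonal (fun i => d i - ev i0) : Matrix (Fin p) (Fin p) ℝ).PosSemidef := by
    rw [Matrix.posSemidef_diagonal_iff]
    intro i
    have : ev i0 ≤ ev i := hmin i (Finset.mem_univ i)
    simp only [hd, Function.comp_apply, RCLike.ofReal_real_eq_id, id_eq]
    linarith
  have := hdiag.mul_mul_conjTranspose_same U
  simpa [Matrix.star_eq_conjTranspose] using this

lemma dot_conj {W Q : Matrix (Fin p) (Fin p) ℝ} (hWH : Wᵀ = W) (y : Fin p → ℝ) :
    (W *ᵥ y) ⬝ᵥ (Q *ᵥ (W *ᵥ y)) = y ⬝ᵥ ((W * Q * W) *ᵥ y) := by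
  rw [Matrix.mulVec_mulVec, Matrix.dotProduct_mulVec, Matrix.vecMul_mulVec, hWH,
    ← Matrix.mul_assoc, ← Matrix.dotProduct_mulVec]

lemma inv_entry_bound_s7 {W : Matrix (Fin p) (Fin p) ℝ} (hW : W.PosDef) {c : ℝ} (hc : 0 < c)
    (hWc : (W - c • (1 : Matrix (Fin p) (Fin p) ℝ)).PosSemidef) (i j : Fin p) :
    |W⁻¹ i j| ≤ c⁻¹ := by
  have hWinv : (W⁻¹).PosDef := hW.inv
  have hdet : IsUnit W.det := hW.det_pos.ne'.isUnit
  have hWmul : W * W⁻¹ = 1 := Matrix.mul_nonsing_inv _ hdet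
  have hWmul' : W⁻¹ * W = 1 := Matrix.nonsing_inv_mul _ hdet
  -- PSD of W*W - c•W
  obtain ⟨R, hR2, hRH⟩ : ∃ R : Matrix (Fin p) (Fin p) ℝ, R * R = W ∧ Rᴴ = R := by
    set U : Matrix (Fin p) (Fin p) ℝ := (hW.1.eigenvectorUnitary : Matrix (Fin p) (Fin p) ℝ)
    have h2 : star U * U = 1 := (Matrix.mem_unitaryGroup_iff').mp hW.1.eigenvectorUnitary.2
    have hspec : W = U * Matrix.diagonal (RCLike.ofReal ∘ hW.1.eigenvalues) * star U := by
      have := hW.1.spectral_theorem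
      rw [Unitary.conjStarAlgAut_apply] at this
      exact this
    refine ⟨U * Matrix.diagonal (fun i => Real.sqrt (hW.1.eigenvalues i)) * star U, ?_, ?_⟩
    · have hd : Matrix.diagonal (fun i => Real.sqrt (hW.1.eigenvalues i))
          * Matrix.diagonal (fun i => Real.sqrt (hW.1.eigenvalues i))
          = Matrix.diagonal (RCLike.ofReal ∘ hW.1.eigenvalues) := by
        rw [Matrix.diagonal_mul_diagonal]
        congr 1
        funext i
        simp [Real.mul_self_sqrt (hW.eigenvalues_pos i).le]
      calc U * Matrix.diagonal (fun i => Real.sqrt (hW.1.eigenvalues i)) * star U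
            * (U * Matrix.diagonal (fun i => Real.sqrt (hW.1.eigenvalues i)) * star U)
          = U * Matrix.diagonal (fun i => Real.sqrt (hW.1.eigenvalues i)) * (star U * U)
            * Matrix.diagonal (fun i => Real.sqrt (hW.1.eigenvalues i)) * star U := by
            simp only [Matrix.mul_assoc]
        _ = W := by rw [h2, Matrix.mul_one, Matrix.mul_assoc U, hd, ← hspec]
    · simp [Matrix.conjTranspose_mul, Matrix.star_eq_conjTranspose, Matrix.mul_assoc]
  have hRW : R * W = W * R := by rw [← hR2, Matrix.mul_assoc]
  have hsq : (W * W - c • W).PosSemidef := by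
    have h0 := hWc.mul_mul_conjTranspose_same R
    have : R * (W - c • (1 : Matrix (Fin p) (Fin p) ℝ)) * Rᴴ = W * W - c • W := by
      rw [hRH, Matrix.mul_sub, Matrix.sub_mul, Matrix.mul_smul, Matrix.smul_mul,
        Matrix.mul_one, Matrix.mul_assoc, ← hRW, ← Matrix.mul_assoc, hR2]
    rwa [this] at h0
  -- Q := c⁻¹ • 1 - W⁻¹ is PSD
  have hQ : ((c : ℝ)⁻¹ • (1 : Matrix (Fin p) (Fin p) ℝ) - W⁻¹).PosSemidef := by
    refine Matrix.PosSemidef.of_dotProduct_mulVec_nonneg ?_ ?_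
    · exact ((myPosSemidef_smul (Matrix.PosSemidef.one) (inv_nonneg.mpr hc.le)).1).sub hWinv.1
    · intro x
      set y : Fin p → ℝ := W⁻¹ *ᵥ x with hy
      have hxy : x = W *ᵥ y := by
        rw [hy, Matrix.mulVec_mulVec, hWmul, Matrix.one_mulVec]
      have hWT : Wᵀ = W := by
        have := hW.1
        rwa [Matrix.IsHermitian, Matrix.conjTranspose_eq_transpose_of_trivial] at this
      have expand : star x ⬝ᵥ ((c⁻¹ • (1 : Matrix (Fin p) (Fin p) ℝ) - W⁻¹) *ᵥ x)
          = c⁻¹ • (y ⬝ᵥ ((W * W - c • W) *ᵥ y)) := by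
        rw [star_trivial]
        rw [Matrix.sub_mulVec]
        rw [dotProduct_sub]
        have e1 : x ⬝ᵥ ((c⁻¹ • (1 : Matrix (Fin p) (Fin p) ℝ)) *ᵥ x)
            = c⁻¹ * (y ⬝ᵥ ((W * (1 : Matrix (Fin p) (Fin p) ℝ) * W) *ᵥ y)) := by
          rw [Matrix.smul_mulVec, dotProduct_smul, smul_eq_mul, Matrix.one_mulVec]
          congr 1
          calc x ⬝ᵥ x = (W *ᵥ y) ⬝ᵥ ((1 : Matrix (Fin p) (Fin p) ℝ) *ᵥ (W *ᵥ y)) := by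
                rw [Matrix.one_mulVec, ← hxy]
            _ = y ⬝ᵥ ((W * 1 * W) *ᵥ y) := dot_conj hWT y
        have e2 : x ⬝ᵥ (W⁻¹ *ᵥ x) = y ⬝ᵥ ((W * W⁻¹ * W) *ᵥ y) := by
          rw [hxy]; exact dot_conj hWT y
        rw [e1, e2]
        rw [Matrix.mul_one, hWmul, Matrix.one_mul]
        rw [Matrix.sub_mulVec, dotProduct_sub, smul_eq_mul, mul_sub]
        congr 1
        rw [Matrix.smul_mulVec, dotProduct_smul, smul_eq_mul]
        rw [← mul_assoc, inv_mul_cancel₀ hc.ne', one_mul]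
      rw [expand]
      have := hsq.dotProduct_mulVec_nonneg y
      rw [star_trivial] at this
      exact smul_nonneg (inv_nonneg.mpr hc.le) this
  -- diagonal bound and conclusion
  have hdiag : ∀ k, W⁻¹ k k ≤ c⁻¹ := by
    intro k
    have h0 := psd_diag_nonneg hQ k
    simp only [Matrix.sub_apply, Matrix.smul_apply, Matrix.one_apply_eq, smul_eq_mul,
      mul_one] at h0
    linarith
  exact psd_entry_bound hWinv.posSemidef hdiag i j


lemma commute_with_sq_form {Y Z : Matrix (Fin p) (Fin p) ℝ} (h : Y * Z = Z * Y) (l a : ℝ) :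
    Y * (l • (1 : Matrix (Fin p) (Fin p) ℝ) + a • (Z * Z))
      = (l • (1 : Matrix (Fin p) (Fin p) ℝ) + a • (Z * Z)) * Y := by
  simp only [Matrix.mul_add, Matrix.add_mul, mul_smul_comm, smul_mul_assoc,
    Matrix.mul_one, Matrix.one_mul]
  congr 1
  rw [← Matrix.mul_assoc, h, Matrix.mul_assoc, h, ← Matrix.mul_assoc]

/-- For T symmetric positive definite and S symmetric PSD with
S and T commuting, the type-I ridge estimator converges to the target T as
λ → ∞. Here `f l` denotes the (unique) symmetric positive definite square
root of λI + (1/4)(S − λT)². -/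
theorem stmt7 (p : ℕ) (S T : Matrix (Fin p) (Fin p) ℝ)
    (hS : S.PosSemidef) (hT : T.PosDef) (hcomm : S * T = T * S)
    (f : ℝ → Matrix (Fin p) (Fin p) ℝ)
    (hf : ∀ l, 0 < l → (f l).PosDef ∧
      (f l) ^ 2 = l • (1 : Matrix (Fin p) (Fin p) ℝ) + (1/4 : ℝ) • (S - l • T) ^ 2) :
    Tendsto (fun l : ℝ => (f l + (1/2 : ℝ) • (S - l • T))⁻¹)
      atTop (nhds T) := by
  rcases Nat.eq_zero_or_pos p with hp0 | hp
  · subst hp0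
    haveI : Subsingleton (Matrix (Fin 0) (Fin 0) ℝ) :=
      ⟨fun a b => by ext i j; exact i.elim0⟩
    exact tendsto_const_nhds.congr fun l => Subsingleton.elim _ _
  -- main case
  have hA : ((1/2 : ℝ) • T).PosDef := myPosDef_smul hT (by norm_num)
  obtain ⟨c, hc, hAc⟩ := exists_psd_sub_smul_one hA hp
  have hXT : ∀ l : ℝ, (S - l • T) * T = T * (S - l • T) := by
    intro l
    rw [Matrix.sub_mul, Matrix.mul_sub, hcomm, Matrix.smul_mul, Matrix.mul_smul]
  have hcommXf : ∀ l : ℝ, 0 < l → f l * (S - l • T) = (S - l • T) * f l := by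
    intro l hl
    apply commute_of_sq_commute (hf l hl).1
    rw [(hf l hl).2, pow_two]
    exact commute_with_sq_form rfl l (1/4)
  have hcommTf : ∀ l : ℝ, 0 < l → f l * T = T * f l := by
    intro l hl
    apply commute_of_sq_commute (hf l hl).1
    rw [(hf l hl).2, pow_two]
    exact commute_with_sq_form (hXT l).symm l (1/4)
  -- the inverse formula
  have hinv : ∀ l : ℝ, 0 < l →
      (f l + (1/2 : ℝ) • (S - l • T))⁻¹
        = l⁻¹ • f l - (1/2 : ℝ) • (l⁻¹ • S - T) := by
    intro l hl
    have hl0 : l ≠ 0 := hl.ne'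
    apply Matrix.inv_eq_right_inv
    have hXl : l⁻¹ • S - T = l⁻¹ • (S - l • T) := by
      rw [smul_sub, smul_smul, inv_mul_cancel₀ hl0, one_smul]
    have hff : f l * f l = l • (1 : Matrix (Fin p) (Fin p) ℝ)
        + (1/4 : ℝ) • ((S - l • T) * (S - l • T)) := by
      rw [← pow_two, (hf l hl).2, pow_two]
    rw [hXl]
    have hcx := hcommXf l hl
    generalize hXg : S - l • T = X at hff hcx ⊢
    simp only [Matrix.mul_sub, Matrix.add_mul, smul_mul_assoc, mul_smul_comm, smul_smul]
    rw [hcx, hff]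
    match_scalars <;> field_simp <;> ring
  -- convergence of D ∘ inv to 0
  set D : ℝ → Matrix (Fin p) (Fin p) ℝ := fun t =>
    t • (1 : Matrix (Fin p) (Fin p) ℝ)
      + (1/4 : ℝ) • ((t • S - T) * (t • S - T)) - (1/4 : ℝ) • (T * T) with hDdef
  have hDcont : Continuous D := by
    apply Continuous.sub
    · apply Continuous.add
      · exact continuous_id.smul continuous_const
      · exact (continuous_const (y := (1/4 : ℝ))).smul
          ((((continuous_id : Continuous (id : ℝ → ℝ)).smul (continuous_const (y := S))).sub (continuous_const (y := T))).mul
            (((continuous_id : Continuous (id : ℝ → ℝ)).smul (continuous_const (y := S))).sub (continuous_const (y := T))))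
    · exact continuous_const
  have hD0 : D 0 = 0 := by
    simp only [hDdef, zero_smul, zero_sub, neg_mul_neg, zero_add]
    abel
  have hE : Tendsto (fun l : ℝ => D l⁻¹) atTop (nhds 0) := by
    have := (hDcont.tendsto 0).comp tendsto_inv_atTop_zero
    rwa [hD0] at this
  have hEik : ∀ i k : Fin p, Tendsto (fun l : ℝ => D l⁻¹ i k) atTop (nhds 0) := by
    intro i k
    have h1 := tendsto_pi_nhds.mp hE i
    have h2 := tendsto_pi_nhds.mp h1 k
    simpa using h2
  -- the key identity
  have hEeq : ∀ l : ℝ, 0 < l →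
      (l⁻¹ • f l) * (l⁻¹ • f l) - ((1/2 : ℝ) • T) * ((1/2 : ℝ) • T) = D l⁻¹ := by
    intro l hl
    have hl0 : l ≠ 0 := hl.ne'
    have hXl : l⁻¹ • S - T = l⁻¹ • (S - l • T) := by
      rw [smul_sub, smul_smul, inv_mul_cancel₀ hl0, one_smul]
    have hff : f l * f l = l • (1 : Matrix (Fin p) (Fin p) ℝ)
        + (1/4 : ℝ) • ((S - l • T) * (S - l • T)) := by
      rw [← pow_two, (hf l hl).2, pow_two]
    simp only [hDdef]
    rw [hXl]
    simp only [smul_mul_assoc, mul_smul_comm, smul_smul]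
    rw [hff]
    match_scalars <;> field_simp <;> ring
  -- convergence of g to (1/2) • T
  have hgA : Tendsto (fun l : ℝ => l⁻¹ • f l - (1/2 : ℝ) • T) atTop (nhds 0) := by
    refine tendsto_pi_nhds.mpr ?_
    intro i
    refine tendsto_pi_nhds.mpr ?_
    intro j
    have key : ∀ l : ℝ, 0 < l →
        ‖(l⁻¹ • f l - (1/2 : ℝ) • T) i j‖ ≤ ∑ k : Fin p, |D l⁻¹ i k| * c⁻¹ := by
      intro l hl
      have hgl : (l⁻¹ • f l).PosDef := myPosDef_smul (hf l hl).1 (inv_pos.mpr hl)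
      have hW : (l⁻¹ • f l + (1/2 : ℝ) • T).PosDef := hgl.add hA
      have hWc : ((l⁻¹ • f l + (1/2 : ℝ) • T) - c • (1 : Matrix (Fin p) (Fin p) ℝ)).PosSemidef := by
        have heq : (l⁻¹ • f l + (1/2 : ℝ) • T) - c • (1 : Matrix (Fin p) (Fin p) ℝ)
            = l⁻¹ • f l + ((1/2 : ℝ) • T - c • (1 : Matrix (Fin p) (Fin p) ℝ)) := by abel
        rw [heq]
        exact hgl.posSemidef.add hAc
      have hbound := fun k j => inv_entry_bound_s7 hW hc hWc k j
      have hgAcomm : (l⁻¹ • f l) * ((1/2 : ℝ) • T) = ((1/2 : ℝ) • T) * (l⁻¹ • f l) := by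
        rw [smul_mul_assoc, mul_smul_comm, smul_mul_assoc, mul_smul_comm, hcommTf l hl,
          smul_comm]
      have hdet : IsUnit (l⁻¹ • f l + (1/2 : ℝ) • T).det := hW.det_pos.ne'.isUnit
      have hfact : l⁻¹ • f l - (1/2 : ℝ) • T
          = ((l⁻¹ • f l) * (l⁻¹ • f l) - ((1/2 : ℝ) • T) * ((1/2 : ℝ) • T))
            * (l⁻¹ • f l + (1/2 : ℝ) • T)⁻¹ := by
        have e1 : (l⁻¹ • f l - (1/2 : ℝ) • T) * (l⁻¹ • f l + (1/2 : ℝ) • T)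
            = (l⁻¹ • f l) * (l⁻¹ • f l) - ((1/2 : ℝ) • T) * ((1/2 : ℝ) • T) := by
          simp only [Matrix.sub_mul, Matrix.mul_add, smul_mul_assoc, mul_smul_comm, smul_smul]
          rw [← hcommTf l hl]
          match_scalars <;> ring
        calc l⁻¹ • f l - (1/2 : ℝ) • T
            = (l⁻¹ • f l - (1/2 : ℝ) • T)
              * ((l⁻¹ • f l + (1/2 : ℝ) • T) * (l⁻¹ • f l + (1/2 : ℝ) • T)⁻¹) := by
              rw [Matrix.mul_nonsing_inv _ hdet, Matrix.mul_one]
          _ = ((l⁻¹ • f l - (1/2 : ℝ) • T) * (l⁻¹ • f l + (1/2 : ℝ) • T))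
              * (l⁻¹ • f l + (1/2 : ℝ) • T)⁻¹ := by rw [Matrix.mul_assoc]
          _ = _ := by rw [e1]
      rw [hfact, hEeq l hl, Matrix.mul_apply]
      refine (Finset.abs_sum_le_sum_abs _ _).trans ?_
      apply Finset.sum_le_sum
      intro k _
      rw [abs_mul]
      exact mul_le_mul_of_nonneg_left (hbound k j) (abs_nonneg _)
    have hb : Tendsto (fun l : ℝ => ∑ k : Fin p, |D l⁻¹ i k| * c⁻¹) atTop (nhds 0) := by
      have h0 : Tendsto (fun l : ℝ => ∑ k : Fin p, |D l⁻¹ i k| * c⁻¹) atTop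
          (nhds (∑ _k : Fin p, |(0:ℝ)| * c⁻¹)) := by
        apply tendsto_finset_sum
        intro k _
        exact ((hEik i k).abs).mul_const _
      simpa using h0
    apply squeeze_zero_norm' _ hb
    filter_upwards [eventually_gt_atTop (0:ℝ)] with l hl
    exact key l hl
  have hg : Tendsto (fun l : ℝ => l⁻¹ • f l) atTop (nhds ((1/2 : ℝ) • T)) := by
    have := hgA.add_const ((1/2 : ℝ) • T)
    simpa using this
  -- assemble
  have hlim2 : Tendsto (fun l : ℝ => (1/2 : ℝ) • (l⁻¹ • S - T)) atTop
      (nhds ((1/2 : ℝ) • ((0:ℝ) • S - T))) := by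
    apply Tendsto.const_smul
    exact (tendsto_inv_atTop_zero.smul_const S).sub_const T
  have hmain : Tendsto (fun l : ℝ => l⁻¹ • f l - (1/2 : ℝ) • (l⁻¹ • S - T)) atTop (nhds T) := by
    have h0 := hg.sub hlim2
    have heq : (1/2 : ℝ) • T - (1/2 : ℝ) • ((0:ℝ) • S - T) = T := by
      simp only [zero_smul, zero_sub, smul_neg, sub_neg_eq_add, ← add_smul]
      norm_num
    rwa [heq] at h0
  apply hmain.congr'
  filter_upwards [eventually_gt_atTop (0:ℝ)] with l hl
  exact (hinv l hl).symm
end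

section
/- Let M be a symmetric p×p real matrix and μ > 0. Then Θ* = (1/μ)[((M/2)² + μI)^{1/2} − M/2] (with (·)^{1/2} the positive definite square root) is symmetric positive definite and satisfies the quadratic matrix equation M Θ* + μ (Θ*)² = I. -/
open Matrix

/-- Unitary conjugation preserves positive definiteness. -/
lemma aux_posdef_conj {n : ℕ} {U D : Matrix (Fin n) (Fin n) ℝ}
    (hU : U ∈ Matrix.unitaryGroup (Fin n) ℝ) (hD : D.PosDef) :
    (U * D * star U).PosDef := by
  have hUU : U * star U = 1 := Matrix.mem_unitaryGroup_iff.mp hU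
  refine posDef_iff_dotProduct_mulVec.mpr ⟨?_, ?_⟩
  · show (U * D * star U)ᴴ = U * D * star U
    have : star U = Uᴴ := rfl
    rw [this, conjTranspose_mul, conjTranspose_mul, conjTranspose_conjTranspose, hD.1.eq,
      Matrix.mul_assoc]
  · intro x hx
    have hx' : star U *ᵥ x ≠ 0 := by
      intro h
      apply hx
      have : (U * star U) *ᵥ x = 0 := by
        rw [← mulVec_mulVec, h, mulVec_zero]
      rwa [hUU, one_mulVec] at this
    have key : star x ⬝ᵥ ((U * D * star U) *ᵥ x)
        = star (star U *ᵥ x) ⬝ᵥ (D *ᵥ (star U *ᵥ x)) := by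
      simp only [star_mulVec, ← mulVec_mulVec, dotProduct_mulVec,
        star_eq_conjTranspose, conjTranspose_conjTranspose]
    rw [key]
    exact hD.dotProduct_mulVec_pos hx'

/-- For M symmetric and μ > 0, with R the positive definite square
root of (M/2)² + μI, the matrix Θ* = (1/μ)[((M/2)² + μI)^{1/2} − M/2] is
symmetric positive definite and satisfies M Θ* + μ (Θ*)² = I. -/
theorem stmt10 (p : ℕ) (M : Matrix (Fin p) (Fin p) ℝ) (hM : M.IsHermitian)
    (μ : ℝ) (hμ : 0 < μ)
    (R : Matrix (Fin p) (Fin p) ℝ) (hR : R.PosDef)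
    (hR2 : R ^ 2 = ((1/2 : ℝ) • M) ^ 2 + μ • (1 : Matrix (Fin p) (Fin p) ℝ)) :
    (μ⁻¹ • (R - (1/2 : ℝ) • M)).PosDef ∧
    M * (μ⁻¹ • (R - (1/2 : ℝ) • M)) + μ • (μ⁻¹ • (R - (1/2 : ℝ) • M)) ^ 2 = 1 := by
  set U : Matrix (Fin p) (Fin p) ℝ := (hM.eigenvectorUnitary : Matrix (Fin p) (Fin p) ℝ)
    with hUdef
  have hUmem : U ∈ Matrix.unitaryGroup (Fin p) ℝ := hM.eigenvectorUnitary.2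
  have hUU : U * star U = 1 := Matrix.mem_unitaryGroup_iff.mp hUmem
  have hsUU : star U * U = 1 := Matrix.mem_unitaryGroup_iff'.mp hUmem
  set d : Fin p → ℝ := hM.eigenvalues with hddef
  -- spectral decomposition of M
  have hspec : M = U * diagonal d * star U := by
    have := hM.spectral_theorem
    rwa [RCLike.ofReal_real_eq_id, Function.id_comp] at this
  -- equality of conjugated diagonals from pointwise equality
  have hdg : ∀ {f g : Fin p → ℝ}, (∀ i, f i = g i) →
      U * diagonal f * star U = U * diagonal g * star U := by
    intro f g h
    rw [funext h]
  -- multiplication rule for conjugated diagonals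
  have conj_mul : ∀ f g : Fin p → ℝ,
      (U * diagonal f * star U) * (U * diagonal g * star U)
        = U * diagonal (fun i => f i * g i) * star U := by
    intro f g
    calc (U * diagonal f * star U) * (U * diagonal g * star U)
        = U * diagonal f * (star U * U) * diagonal g * star U := by
          simp only [Matrix.mul_assoc]
      _ = U * (diagonal f * diagonal g) * star U := by
          rw [hsUU, Matrix.mul_one]
          simp only [Matrix.mul_assoc]
      _ = U * diagonal (fun i => f i * g i) * star U := by
          rw [diagonal_mul_diagonal]
  -- smul rule
  have conj_smul : ∀ (c : ℝ) (f : Fin p → ℝ),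
      c • (U * diagonal f * star U) = U * diagonal (fun i => c * f i) * star U := by
    intro c f
    have h1 : (fun i => c * f i) = c • f := rfl
    rw [h1, diagonal_smul]
    simp only [Matrix.mul_smul, Matrix.smul_mul]
  -- addition rule
  have conj_add : ∀ f g : Fin p → ℝ,
      (U * diagonal f * star U) + (U * diagonal g * star U)
        = U * diagonal (fun i => f i + g i) * star U := by
    intro f g
    rw [← Matrix.add_mul, ← Matrix.mul_add, diagonal_add]
  -- the explicit square root
  set s : Fin p → ℝ := fun i => Real.sqrt ((d i / 2) ^ 2 + μ) with hsdef
  have hs_pos : ∀ i, 0 < s i := fun i =>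
    Real.sqrt_pos.mpr (by positivity)
  have hs_sq : ∀ i, s i ^ 2 = (d i / 2) ^ 2 + μ := fun i =>
    Real.sq_sqrt (by positivity)
  set R₀ : Matrix (Fin p) (Fin p) ℝ := U * diagonal s * star U with hR₀def
  have hhalfM : (1/2 : ℝ) • M = U * diagonal (fun i => (1/2 : ℝ) * d i) * star U := by
    rw [hspec, conj_smul]
  have hone : (1 : Matrix (Fin p) (Fin p) ℝ) = U * diagonal (fun _ => (1:ℝ)) * star U := by
    rw [diagonal_one, Matrix.mul_one, hUU]
  have hR₀sq : R₀ ^ 2 = ((1/2 : ℝ) • M) ^ 2 + μ • (1 : Matrix (Fin p) (Fin p) ℝ) := by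
    rw [hR₀def, sq, conj_mul, hhalfM, sq, conj_mul, hone, conj_smul, conj_add]
    apply hdg
    intro i
    nlinarith [hs_sq i]
  have hR₀pos : R₀.PosDef :=
    aux_posdef_conj hUmem (Matrix.PosDef.diagonal hs_pos)
  -- uniqueness of PSD square roots gives R = R₀
  have hRR₀ : R = R₀ := by
    open scoped MatrixOrder in
    exact (CFC.sq_eq_sq_iff R R₀ hR.posSemidef.nonneg hR₀pos.posSemidef.nonneg).mp
      (hR2.trans hR₀sq.symm)
  -- the matrix Θ*
  set t : Fin p → ℝ := fun i => μ⁻¹ * (s i - d i / 2) with htdef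
  have hTheta : μ⁻¹ • (R - (1/2 : ℝ) • M) = U * diagonal t * star U := by
    rw [hRR₀, hR₀def, hhalfM, ← Matrix.sub_mul, ← Matrix.mul_sub, diagonal_sub, conj_smul]
    apply hdg
    intro i
    show μ⁻¹ * (s i - (1/2) * d i) = t i
    rw [htdef]
    ring
  have ht_pos : ∀ i, 0 < t i := by
    intro i
    rw [htdef]
    have hsd : d i / 2 < s i := by
      rcases le_or_gt (d i / 2) 0 with h | h
      · exact lt_of_le_of_lt h (hs_pos i)
      · rw [hsdef]
        rw [show (fun i => Real.sqrt ((d i / 2) ^ 2 + μ)) i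
            = Real.sqrt ((d i / 2) ^ 2 + μ) from rfl]
        rw [Real.lt_sqrt h.le]
        linarith
    have h0 : 0 < s i - d i / 2 := by linarith
    positivity
  constructor
  · rw [hTheta]
    exact aux_posdef_conj hUmem (Matrix.PosDef.diagonal ht_pos)
  · rw [hTheta, hspec, conj_mul, sq, conj_mul, conj_smul, conj_add, hone]
    apply hdg
    intro i
    have h1 := hs_sq i
    have h2 : t i = μ⁻¹ * (s i - d i / 2) := rfl
    rw [h2]
    field_simp
    nlinarith [hs_sq i]
end

section
/- Let M be a symmetric p×p real matrix and μ > 0. The equation M X + μ X² = I has a unique symmetric positive definite solution, namely X = (1/μ)[((M/2)² + μI)^{1/2} − M/2]. -/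
open Matrix

lemma comm_of_comm_sq {p : ℕ} {R A : Matrix (Fin p) (Fin p) ℝ} (hR : R.PosDef)
    (h : A * (R * R) = (R * R) * A) : A * R = R * A := by
  have hH := hR.1
  set U : Matrix (Fin p) (Fin p) ℝ := (hH.eigenvectorUnitary : Matrix (Fin p) (Fin p) ℝ)
    with hUdef
  have hU1 : U * star U = 1 := mem_unitaryGroup_iff.mp hH.eigenvectorUnitary.2
  have hU2 : star U * U = 1 := mem_unitaryGroup_iff'.mp hH.eigenvectorUnitary.2
  have hc1 : ∀ X : Matrix (Fin p) (Fin p) ℝ, star U * (U * X) = X := fun X => by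
    rw [← Matrix.mul_assoc, hU2, Matrix.one_mul]
  have hc2 : ∀ X : Matrix (Fin p) (Fin p) ℝ, U * (star U * X) = X := fun X => by
    rw [← Matrix.mul_assoc, hU1, Matrix.one_mul]
  set d : Fin p → ℝ := hH.eigenvalues with hddef
  have hd : ∀ i, 0 < d i := hR.eigenvalues_pos
  have hspec : R = U * diagonal d * star U := by simpa using hH.spectral_theorem
  set B : Matrix (Fin p) (Fin p) ℝ := star U * A * U with hBdef
  have hAB : A = U * B * star U := by
    rw [hBdef, ← Matrix.mul_assoc, ← Matrix.mul_assoc, hU1, Matrix.one_mul,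
      Matrix.mul_assoc, hU1, Matrix.mul_one]
  have hRR : R * R = U * diagonal (fun i => d i * d i) * star U := by
    rw [hspec, ← diagonal_mul_diagonal]
    simp only [Matrix.mul_assoc, hc1, hc2]
  have hBD2 : B * diagonal (fun i => d i * d i) = diagonal (fun i => d i * d i) * B := by
    have h' : U * (B * diagonal (fun i => d i * d i)) * star U
        = U * (diagonal (fun i => d i * d i) * B) * star U := by
      calc U * (B * diagonal (fun i => d i * d i)) * star U
          = (U * B * star U) * (U * diagonal (fun i => d i * d i) * star U) := by
            simp only [Matrix.mul_assoc, hc1, hc2]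
        _ = A * (R * R) := by rw [← hAB, ← hRR]
        _ = (R * R) * A := h
        _ = (U * diagonal (fun i => d i * d i) * star U) * (U * B * star U) := by
            rw [← hAB, ← hRR]
        _ = U * (diagonal (fun i => d i * d i) * B) * star U := by
            simp only [Matrix.mul_assoc, hc1, hc2]
    have h'' := congrArg (fun Z => star U * Z * U) h'
    simp only [Matrix.mul_assoc, hc1] at h''
    simpa only [← Matrix.mul_assoc, hU2, Matrix.one_mul, Matrix.mul_one] using h''
  have hBD : B * diagonal d = diagonal d * B := by
    ext i j
    rw [mul_diagonal, diagonal_mul]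
    have hij := congrFun (congrFun hBD2 i) j
    simp only [mul_diagonal, diagonal_mul] at hij
    rcases eq_or_ne (B i j) 0 with h0 | h0
    · simp [h0]
    · have hsq : d j * d j = d i * d i := by
        apply mul_left_cancel₀ h0
        calc B i j * (d j * d j) = d i * d i * B i j := hij
          _ = B i j * (d i * d i) := by ring
      have hdd : d j = d i := by nlinarith [hd i, hd j]
      rw [hdd]; ring
  calc A * R = (U * B * star U) * (U * diagonal d * star U) := by rw [← hAB, ← hspec]
    _ = U * (B * diagonal d) * star U := by simp only [Matrix.mul_assoc, hc1, hc2]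
    _ = U * (diagonal d * B) * star U := by rw [hBD]
    _ = (U * diagonal d * star U) * (U * B * star U) := by
        simp only [Matrix.mul_assoc, hc1, hc2]
    _ = R * A := by rw [← hAB, ← hspec]

lemma dp_symm {p : ℕ} {M : Matrix (Fin p) (Fin p) ℝ} (hM : M.IsHermitian)
    (x w : Fin p → ℝ) : (M *ᵥ x) ⬝ᵥ w = x ⬝ᵥ (M *ᵥ w) := by
  have hMT : Mᵀ = M := by
    rw [← conjTranspose_eq_transpose_of_trivial]; exact hM.eq
  calc (M *ᵥ x) ⬝ᵥ w = w ⬝ᵥ (M *ᵥ x) := dotProduct_comm _ _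
    _ = (w ᵥ* M) ⬝ᵥ x := dotProduct_mulVec _ _ _
    _ = x ⬝ᵥ (w ᵥ* M) := dotProduct_comm _ _
    _ = x ⬝ᵥ (M *ᵥ w) := by rw [← hMT, vecMul_transpose, hMT]

lemma posDef_sub_and_add {p : ℕ} {R A : Matrix (Fin p) (Fin p) ℝ} {μ : ℝ} (hμ : 0 < μ)
    (hR : R.PosDef) (hA : A.IsHermitian) (hAR : A * R = R * A)
    (h2 : R * R = A * A + μ • 1) :
    (R - A).PosDef ∧ (R + A).PosDef := by
  have hdet : IsUnit R.det := (Matrix.isUnit_iff_isUnit_det R).mp hR.isUnit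
  have hRRi : R * R⁻¹ = 1 := mul_nonsing_inv _ hdet
  have hRiR : R⁻¹ * R = 1 := nonsing_inv_mul _ hdet
  have hRi : R⁻¹.PosDef := hR.inv
  have hARi : A * R⁻¹ = R⁻¹ * A := by
    calc A * R⁻¹ = R⁻¹ * (R * (A * R⁻¹)) := by
          rw [← Matrix.mul_assoc, ← Matrix.mul_assoc, hRiR, Matrix.one_mul]
      _ = R⁻¹ * ((R * A) * R⁻¹) := by rw [Matrix.mul_assoc]
      _ = R⁻¹ * ((A * R) * R⁻¹) := by rw [hAR]
      _ = R⁻¹ * (A * (R * R⁻¹)) := by rw [Matrix.mul_assoc]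
      _ = R⁻¹ * A := by rw [hRRi, Matrix.mul_one]
  have hAA : A * A = R * R - μ • 1 := by rw [h2, add_sub_cancel_right]
  have hARA : A * (R⁻¹ * A) = R - μ • R⁻¹ := by
    rw [← hARi, ← Matrix.mul_assoc, hAA, Matrix.sub_mul, Matrix.mul_assoc, hRRi,
      Matrix.mul_one, smul_mul_assoc, Matrix.one_mul]
  -- key inequality
  have key : ∀ x : Fin p → ℝ, x ≠ 0 → |x ⬝ᵥ (A *ᵥ x)| < x ⬝ᵥ (R *ᵥ x) := by
    intro x hx
    set c := x ⬝ᵥ (R *ᵥ x) with hc0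
    set b := x ⬝ᵥ (A *ᵥ x) with hb0
    set e := x ⬝ᵥ (R⁻¹ *ᵥ x) with he0
    have hc : 0 < c := by have := hR.dotProduct_mulVec_pos hx; rwa [star_trivial] at this
    have he : 0 < e := by have := hRi.dotProduct_mulVec_pos hx; rwa [star_trivial] at this
    have hq : ∀ t : ℝ, 0 ≤ (c - μ * e) * (t * t) + (2 * b) * t + c := by
      intro t
      have h0 : 0 ≤ ((R + t • A) *ᵥ x) ⬝ᵥ (R⁻¹ *ᵥ ((R + t • A) *ᵥ x)) := by
        have := hRi.posSemidef.dotProduct_mulVec_nonneg ((R + t • A) *ᵥ x)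
        rwa [star_trivial] at this
      have hsym : (R + t • A).IsHermitian := hR.1.add (by rw [Matrix.IsHermitian, conjTranspose_smul, hA.eq, star_trivial])
      have hinner : R⁻¹ * (R + t • A) = 1 + t • (R⁻¹ * A) := by
        rw [Matrix.mul_add, hRiR, mul_smul_comm]
      have hmat : (R + t • A) * (R⁻¹ * (R + t • A))
          = R + (2 * t) • A + (t * t) • (R - μ • R⁻¹) := by
        rw [hinner, Matrix.add_mul, Matrix.mul_add, Matrix.mul_add, Matrix.mul_one,
          Matrix.mul_one, mul_smul_comm, ← Matrix.mul_assoc, hRRi, Matrix.one_mul,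
          mul_smul_comm, smul_mul_assoc, smul_smul, hARA]
        module
      have heq : ((R + t • A) *ᵥ x) ⬝ᵥ (R⁻¹ *ᵥ ((R + t • A) *ᵥ x))
          = (c - μ * e) * (t * t) + (2 * b) * t + c := by
        rw [mulVec_mulVec, dp_symm hsym, mulVec_mulVec, hmat]
        simp only [Matrix.add_mulVec, Matrix.smul_mulVec, Matrix.sub_mulVec,
          dotProduct_add, dotProduct_smul, dotProduct_sub, smul_eq_mul, ← hc0, ← hb0, ← he0]
        ring
      rw [← heq]; exact h0
    have hdisc := discrim_le_zero hq
    rw [discrim] at hdisc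
    rw [abs_lt]
    constructor
    · nlinarith [mul_pos (mul_pos hμ he) hc, mul_nonneg (le_of_lt hc) (le_of_lt hc)]
    · nlinarith [mul_pos (mul_pos hμ he) hc]
  constructor
  · refine .of_dotProduct_mulVec_pos (hR.1.sub hA) (fun x hx => ?_)
    rw [star_trivial, Matrix.sub_mulVec, dotProduct_sub]
    have := key x hx
    have habs := abs_lt.mp this
    linarith [habs.2]
  · refine .of_dotProduct_mulVec_pos (hR.1.add hA) (fun x hx => ?_)
    rw [star_trivial, Matrix.add_mulVec, dotProduct_add]
    have := key x hx
    have habs := abs_lt.mp this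
    linarith [habs.1]

private lemma posDef_smul' {p : ℕ} {c : ℝ} (hc : 0 < c)
    {B : Matrix (Fin p) (Fin p) ℝ} (hB : B.PosDef) : (c • B).PosDef := by
  refine .of_dotProduct_mulVec_pos ?_ (fun x hx => ?_)
  · rw [Matrix.IsHermitian, conjTranspose_smul, hB.1.eq, star_trivial]
  · rw [Matrix.smul_mulVec, dotProduct_smul, smul_eq_mul]
    exact mul_pos hc (hB.dotProduct_mulVec_pos hx)

/-- For M symmetric and μ > 0, the equation M X + μ X² = I has a
unique symmetric positive definite solution, namely
X = (1/μ)[((M/2)² + μI)^{1/2} − M/2] (R being that positive definite square root). -/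
theorem stmt11 (p : ℕ) (M : Matrix (Fin p) (Fin p) ℝ) (hM : M.IsHermitian)
    (μ : ℝ) (hμ : 0 < μ)
    (R : Matrix (Fin p) (Fin p) ℝ) (hR : R.PosDef)
    (hR2 : R ^ 2 = ((1/2 : ℝ) • M) ^ 2 + μ • (1 : Matrix (Fin p) (Fin p) ℝ)) :
    ∀ X : Matrix (Fin p) (Fin p) ℝ,
      (X.PosDef ∧ M * X + μ • X ^ 2 = 1) ↔ X = μ⁻¹ • (R - (1/2 : ℝ) • M) := by
  obtain ⟨A, hAdef⟩ : ∃ A : Matrix (Fin p) (Fin p) ℝ, A = (1/2 : ℝ) • M := ⟨_, rfl⟩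
  rw [← hAdef] at hR2
  simp only [← hAdef]
  have hA : A.IsHermitian := by
    rw [hAdef, Matrix.IsHermitian, conjTranspose_smul, hM.eq, star_trivial]
  have hR2' : R * R = A * A + μ • 1 := by
    rw [← pow_two, ← pow_two]; exact hR2
  have hcommsq : A * (R * R) = (R * R) * A := by
    rw [hR2', Matrix.mul_add, Matrix.add_mul, mul_smul_comm, smul_mul_assoc,
      Matrix.mul_one, Matrix.one_mul, ← Matrix.mul_assoc]
  have hAR : A * R = R * A := comm_of_comm_sq hR hcommsq
  obtain ⟨hsub, hadd⟩ := posDef_sub_and_add hμ hR hA hAR hR2'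
  have hM2 : M = (2:ℝ) • A := by rw [hAdef, smul_smul]; norm_num
  have hkey : (2:ℝ) • (A * (R - A)) + (R - A) * (R - A) = μ • (1 : Matrix (Fin p) (Fin p) ℝ) := by
    have expand : (R - A) * (R - A) = R * R - R * A - A * R + A * A := by noncomm_ring
    rw [Matrix.mul_sub, expand, hAR, hR2']
    module
  intro X
  constructor
  · rintro ⟨hX, heq⟩
    have hXH := hX.1
    have hcommMX : X * M = M * X := by
      have h1 := congrArg conjTranspose heq
      simp only [conjTranspose_add, conjTranspose_mul, conjTranspose_smul, conjTranspose_one,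
        conjTranspose_pow, hXH.eq, hM.eq, star_trivial] at h1
      exact add_right_cancel (h1.trans heq.symm)
    have hMX1 : M * X = 1 - μ • (X * X) := by
      have h1 := eq_sub_of_add_eq heq
      rwa [pow_two] at h1
    have hXA : X * A = (1/2 : ℝ) • (M * X) := by
      rw [hAdef, mul_smul_comm, hcommMX]
    have hAX : A * X = (1/2 : ℝ) • (M * X) := by
      rw [hAdef, smul_mul_assoc]
    have hS2 : (μ • X + A) * (μ • X + A) = R * R := by
      have expand : (μ • X + A) * (μ • X + A)
          = (μ * μ) • (X * X) + μ • (X * A) + μ • (A * X) + A * A := by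
        simp only [Matrix.add_mul, Matrix.mul_add, smul_mul_assoc, mul_smul_comm, smul_smul]
        module
      rw [expand, hXA, hAX, hMX1, hR2']
      module
    have hXinv : X⁻¹ = M + μ • X := by
      apply Matrix.inv_eq_left_inv
      rw [Matrix.add_mul, smul_mul_assoc, ← pow_two]
      exact heq
    have hSpos : (μ • X + A).PosDef := by
      have h1 : (μ • X).PosDef := posDef_smul' hμ hX
      have h2 : (M + μ • X).PosDef := by
        have h3 := hX.inv
        rwa [hXinv] at h3
      have h4 : ((μ • X) + (M + μ • X)).PosDef := h1.add h2
      have h5 : μ • X + A = (1/2 : ℝ) • ((μ • X) + (M + μ • X)) := by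
        rw [hAdef]; module
      rw [h5]
      exact posDef_smul' (by norm_num) h4
    have hSR : μ • X + A = R :=
      by open scoped MatrixOrder in exact (CFC.sq_eq_sq_iff _ _ (nonneg_iff_posSemidef.mpr hSpos.posSemidef)
        (nonneg_iff_posSemidef.mpr hR.posSemidef)).mp (by rw [pow_two, pow_two, hS2])
    have hmuX : μ • X = R - A := by rw [← hSR, add_sub_cancel_right]
    calc X = μ⁻¹ • (μ • X) := by rw [smul_smul, inv_mul_cancel₀ hμ.ne', one_smul]
      _ = μ⁻¹ • (R - A) := by rw [hmuX]
  · rintro rfl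
    constructor
    · exact posDef_smul' (inv_pos.mpr hμ) hsub
    · have e1 : M * (μ⁻¹ • (R - A)) = μ⁻¹ • ((2:ℝ) • (A * (R - A))) := by
        rw [hM2, mul_smul_comm, smul_mul_assoc]
      have e2 : μ • ((μ⁻¹ • (R - A)) * (μ⁻¹ • (R - A))) = μ⁻¹ • ((R - A) * (R - A)) := by
        rw [smul_mul_assoc, mul_smul_comm, smul_smul, smul_smul]
        congr 1
        field_simp
      rw [pow_two, e1, e2, ← smul_add, hkey, smul_smul, inv_mul_cancel₀ hμ.ne', one_smul]
end

section
/- Let S be a symmetric p×p real matrix, Γ and T symmetric matrices, λ₁ ∈ (0,1], λ₂ > 0, and set M = (1−λ₁)S + λ₁Γ − λ₂T (symmetric). Then Θ̂ = [(λ₂I + (1/4)M²)^{1/2} + (1/2)M]⁻¹ is symmetric positive definite and satisfies the normal equation Θ̂⁻¹ − (1−λ₁)S − λ₁Γ − λ₂Θ̂ + λ₂T = 0. -/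
open Matrix

section Aux

variable {p : ℕ}

open scoped MatrixOrder in
noncomputable def Matrix.PosSemidef.sqrt {A : Matrix (Fin p) (Fin p) ℝ} (_ : A.PosSemidef) :
    Matrix (Fin p) (Fin p) ℝ := CFC.sqrt A

open scoped MatrixOrder in
lemma Matrix.PosSemidef.posSemidef_sqrt {A : Matrix (Fin p) (Fin p) ℝ} (hA : A.PosSemidef) :
    hA.sqrt.PosSemidef := (CFC.sqrt_nonneg A).posSemidef

open scoped MatrixOrder in
lemma Matrix.PosSemidef.sqrt_mul_self {A : Matrix (Fin p) (Fin p) ℝ} (hA : A.PosSemidef) :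
    hA.sqrt * hA.sqrt = A := CFC.sqrt_mul_sqrt_self A hA.nonneg

lemma aux_trace_nonneg (E : Matrix (Fin p) (Fin p) ℝ) : 0 ≤ (Eᴴ * E).trace := by
  simp only [Matrix.trace, Matrix.diag, Matrix.mul_apply, Matrix.conjTranspose_apply,
    RCLike.star_def, starRingEnd_apply, star_trivial]
  exact Finset.sum_nonneg fun j _ => Finset.sum_nonneg fun k _ => mul_self_nonneg _

lemma aux_eq_zero_of_trace (E : Matrix (Fin p) (Fin p) ℝ) (h : (Eᴴ * E).trace = 0) : E = 0 := by
  simp only [Matrix.trace, Matrix.diag, Matrix.mul_apply, Matrix.conjTranspose_apply,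
    RCLike.star_def, starRingEnd_apply, star_trivial] at h
  ext i j
  have h1 := (Finset.sum_eq_zero_iff_of_nonneg
    (fun j _ => Finset.sum_nonneg fun k _ => mul_self_nonneg (E k j))).mp h j (Finset.mem_univ j)
  have h2 := (Finset.sum_eq_zero_iff_of_nonneg
    (fun k _ => mul_self_nonneg (E k j))).mp h1 i (Finset.mem_univ i)
  simpa using mul_self_eq_zero.mp h2

lemma aux_posdef_of_psd (A : Matrix (Fin p) (Fin p) ℝ) (hA : A.PosSemidef)
    (h : IsUnit A.det) : A.PosDef := by
  refine PosDef.of_dotProduct_mulVec_pos hA.1 fun x hx => ?_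
  rcases lt_or_eq_of_le (hA.dotProduct_mulVec_nonneg x) with h1 | h1
  · exact h1
  · exfalso
    apply hx
    have h0 : A *ᵥ x = 0 := (hA.dotProduct_mulVec_zero_iff x).mp h1.symm
    have hinj := Matrix.mulVec_injective_iff_isUnit.mpr (Matrix.isUnit_iff_isUnit_det A |>.mpr h)
    exact hinj (by simpa using h0)

lemma aux_sqrt_posdef (A : Matrix (Fin p) (Fin p) ℝ) (hA : A.PosDef) :
    hA.posSemidef.sqrt.PosDef := by
  apply aux_posdef_of_psd _ hA.posSemidef.posSemidef_sqrt
  have hss : hA.posSemidef.sqrt * hA.posSemidef.sqrt = A := hA.posSemidef.sqrt_mul_self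
  have hd : A.det ≠ 0 := hA.det_pos.ne'
  have : hA.posSemidef.sqrt.det * hA.posSemidef.sqrt.det = A.det := by
    rw [← Matrix.det_mul, hss]
  exact isUnit_iff_ne_zero.mpr (fun h0 => hd (by rw [← this, h0, mul_zero]))


lemma aux_commute (P B : Matrix (Fin p) (Fin p) ℝ) (hP : P.PosDef) (hB : B.IsHermitian)
    (h : P * P * B = B * (P * P)) : P * B = B * P := by
  set s := hP.posSemidef.sqrt with hs
  have hsh : sᴴ = s := hP.posSemidef.posSemidef_sqrt.1
  have hss : s * s = P := hP.posSemidef.sqrt_mul_self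
  set C := P * B - B * P with hC
  have hanti : P * C = -(C * P) := by
    have h0 : P * C + C * P = 0 := by
      have : P * C + C * P = P * P * B - B * (P * P) := by
        simp only [hC, mul_sub, sub_mul, mul_assoc]
        abel
      rw [this, h, sub_self]
    rw [eq_neg_iff_add_eq_zero]
    exact h0
  have hCt : Cᴴ = -C := by
    rw [hC, conjTranspose_sub, conjTranspose_mul, conjTranspose_mul, hP.1.eq, hB.eq, neg_sub]
  have e1 : (s * C)ᴴ * (s * C) = C * (C * P) := by
    rw [conjTranspose_mul, hsh, hCt]
    have key : s * (s * C) = -(C * P) := by rw [← mul_assoc, hss, hanti]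
    simp [mul_assoc, key]
  have e2 : ((C * s)ᴴ * (C * s)).trace = -((C * (C * P)).trace) := by
    rw [conjTranspose_mul, hsh, hCt]
    have : s * -C * (C * s) = -(s * (C * (C * s))) := by simp [mul_assoc]
    rw [this, trace_neg, trace_mul_comm]
    congr 1
    rw [mul_assoc, mul_assoc, hss]
  have hT1 : 0 ≤ (C * (C * P)).trace := by rw [← e1]; exact aux_trace_nonneg (s * C)
  have hT2 : 0 ≤ -((C * (C * P)).trace) := by rw [← e2]; exact aux_trace_nonneg (C * s)
  have ht0 : ((s * C)ᴴ * (s * C)).trace = 0 := by rw [e1]; linarith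
  have hsC : s * C = 0 := aux_eq_zero_of_trace _ ht0
  have hsu : IsUnit s.det := (aux_sqrt_posdef P hP).det_pos.ne'.isUnit
  have hC0 : C = 0 := by
    have := congrArg (fun X => s⁻¹ * X) hsC
    simpa [← mul_assoc, nonsing_inv_mul s hsu] using this
  rw [hC, sub_eq_zero] at hC0
  exact hC0


lemma aux_posdef_conj_s16 (Q B : Matrix (Fin p) (Fin p) ℝ) (hQ : Q.PosDef) (hB : IsUnit B.det) :
    (Bᴴ * Q * B).PosDef := by
  refine PosDef.of_dotProduct_mulVec_pos (isHermitian_conjTranspose_mul_mul B hQ.1) fun x hx => ?_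
  have hx' : B *ᵥ x ≠ 0 := fun h0 => hx <| by
    have hinj := Matrix.mulVec_injective_iff_isUnit.mpr (Matrix.isUnit_iff_isUnit_det B |>.mpr hB)
    exact hinj (by simpa using h0)
  simpa only [star_mulVec, dotProduct_mulVec, vecMul_vecMul] using hQ.dotProduct_mulVec_pos hx'

lemma aux_posdef_mul (P Q : Matrix (Fin p) (Fin p) ℝ) (hP : P.PosDef) (hQ : Q.PosDef)
    (h : P * Q = Q * P) : (P * Q).PosDef := by
  set s := hP.posSemidef.sqrt with hs
  have hsd : s.PosDef := aux_sqrt_posdef P hP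
  have hsh : sᴴ = s := hsd.1
  have hss : s * s = P := hP.posSemidef.sqrt_mul_self
  have hcomm : s * Q = Q * s := aux_commute s Q hsd hQ.1 (by rw [hss]; exact h)
  have key : P * Q = sᴴ * Q * s := by
    rw [hsh, hcomm, mul_assoc, hss, h]
  rw [key]
  exact aux_posdef_conj_s16 Q s hQ hsd.det_pos.ne'.isUnit

lemma aux_herm_smul (c : ℝ) (A : Matrix (Fin p) (Fin p) ℝ) (hA : A.IsHermitian) :
    (c • A).IsHermitian := by
  unfold Matrix.IsHermitian
  rw [conjTranspose_smul, hA.eq]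
  simp

lemma aux_posdef_smul (c : ℝ) (hc : 0 < c) (A : Matrix (Fin p) (Fin p) ℝ) (hA : A.PosDef) :
    (c • A).PosDef := by
  refine PosDef.of_dotProduct_mulVec_pos (aux_herm_smul c A hA.1) fun x hx => ?_
  have := hA.dotProduct_mulVec_pos hx
  rw [smul_mulVec, dotProduct_smul]
  exact mul_pos hc this

end Aux

/-- With M = (1−λ₁)S + λ₁Γ − λ₂T symmetric and R the positive
definite square root of λ₂I + (1/4)M², the estimator
Θ̂ = [R + (1/2)M]⁻¹ is symmetric positive definite and satisfies the normal
equation Θ̂⁻¹ − (1−λ₁)S − λ₁Γ − λ₂Θ̂ + λ₂T = 0. -/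
theorem stmt16 (p : ℕ) (S Γ T : Matrix (Fin p) (Fin p) ℝ)
    (hS : S.IsHermitian) (hΓ : Γ.IsHermitian) (hT : T.IsHermitian)
    (l₁ l₂ : ℝ) (hl₁0 : 0 < l₁) (hl₁1 : l₁ ≤ 1) (hl₂ : 0 < l₂)
    (R : Matrix (Fin p) (Fin p) ℝ) (hR : R.PosDef)
    (hR2 : R ^ 2 = l₂ • (1 : Matrix (Fin p) (Fin p) ℝ) +
      (1/4 : ℝ) • ((1 - l₁) • S + l₁ • Γ - l₂ • T) ^ 2) :
    ((R + (1/2 : ℝ) • ((1 - l₁) • S + l₁ • Γ - l₂ • T))⁻¹).PosDef ∧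
    ((R + (1/2 : ℝ) • ((1 - l₁) • S + l₁ • Γ - l₂ • T))⁻¹)⁻¹ -
      (1 - l₁) • S - l₁ • Γ -
      l₂ • (R + (1/2 : ℝ) • ((1 - l₁) • S + l₁ • Γ - l₂ • T))⁻¹ + l₂ • T = 0 := by
  -- abbreviations (plain definitions, no `set`)
  obtain ⟨M, hMdef⟩ : ∃ M, M = (1 - l₁) • S + l₁ • Γ - l₂ • T := ⟨_, rfl⟩
  obtain ⟨N, hNdef⟩ : ∃ N, N = (1/2 : ℝ) • M := ⟨_, rfl⟩
  obtain ⟨L, hLdef⟩ : ∃ L, L = l₂ • (1 : Matrix (Fin p) (Fin p) ℝ) := ⟨_, rfl⟩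
  obtain ⟨A, hAdef⟩ : ∃ A, A = R + N := ⟨_, rfl⟩
  obtain ⟨B, hBdef⟩ : ∃ B, B = R - N := ⟨_, rfl⟩
  obtain ⟨K, hKdef⟩ : ∃ K, K = A * A + L := ⟨_, rfl⟩
  have hgoalA : R + (1/2 : ℝ) • ((1 - l₁) • S + l₁ • Γ - l₂ • T) = A := by
    rw [hAdef, hNdef, hMdef]
  rw [hgoalA]
  have hM : M.IsHermitian := by
    rw [hMdef]
    exact ((aux_herm_smul _ _ hS).add (aux_herm_smul _ _ hΓ)).sub (aux_herm_smul _ _ hT)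
  have hN : N.IsHermitian := hNdef ▸ aux_herm_smul _ _ hM
  have hR2' : R * R = L + N * N := by
    have h1 : N * N = (1/4 : ℝ) • (M * M) := by
      rw [hNdef, smul_mul_assoc, mul_smul_comm, smul_smul]
      norm_num
    rw [h1, hLdef, hMdef]
    simpa [pow_two] using hR2
  have hRM : R * M = M * R := by
    apply aux_commute R M hR hM
    have h2 : R * R = l₂ • (1 : Matrix (Fin p) (Fin p) ℝ) + (1/4 : ℝ) • (M * M) := by
      rw [hR2', hLdef]
      congr 1
      rw [hNdef, smul_mul_assoc, mul_smul_comm, smul_smul]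
      norm_num
    rw [h2]
    simp [add_mul, mul_add, smul_mul_assoc, mul_smul_comm, mul_assoc]
  have hRN : R * N = N * R := by rw [hNdef, mul_smul_comm, smul_mul_assoc, hRM]
  have hNN : N * N = R * R - L := by rw [hR2']; noncomm_ring
  have hAherm : A.IsHermitian := by rw [hAdef]; exact hR.1.add hN
  -- A * B = B * A = L
  have hAB : A * B = L := by
    rw [hAdef, hBdef]
    calc (R + N) * (R - N) = R * R - R * N + (N * R - N * N) := by noncomm_ring
    _ = R * R - R * N + (R * N - (R * R - L)) := by rw [← hRN, hNN]
    _ = L := by noncomm_ring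
  have hBA : B * A = L := by
    rw [hAdef, hBdef]
    calc (R - N) * (R + N) = R * R + R * N - (N * R + N * N) := by noncomm_ring
    _ = R * R + R * N - (R * N + (R * R - L)) := by rw [← hRN, hNN]
    _ = L := by noncomm_ring
  have hABone : A * (l₂⁻¹ • B) = 1 := by
    rw [mul_smul_comm, hAB, hLdef, smul_smul, inv_mul_cancel₀ hl₂.ne', one_smul]
  have hBAone : (l₂⁻¹ • B) * A = 1 := by
    rw [smul_mul_assoc, hBA, hLdef, smul_smul, inv_mul_cancel₀ hl₂.ne', one_smul]
  have hAinv : A⁻¹ = l₂⁻¹ • B := inv_eq_right_inv hABone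
  have hAAinv : A * A⁻¹ = 1 := by rw [hAinv]; exact hABone
  have hinvinv : (A⁻¹)⁻¹ = A := by
    apply inv_eq_right_inv
    rw [hAinv]; exact hBAone
  -- K = R*A + R*A
  have hK : K = R * A + R * A := by
    rw [hKdef, hAdef]
    calc (R + N) * (R + N) + L
        = R * R + R * N + N * R + N * N + L := by noncomm_ring
    _ = R * R + R * N + R * N + (R * R - L) + L := by rw [← hRN, hNN]
    _ = R * (R + N) + R * (R + N) := by noncomm_ring
  have hKpos : K.PosDef := by
    rw [hKdef]
    have h1 : (A * A).PosSemidef := by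
      have := Matrix.posSemidef_conjTranspose_mul_self A
      rwa [hAherm.eq] at this
    rw [hLdef]
    exact Matrix.PosDef.posSemidef_add h1 (aux_posdef_smul l₂ hl₂ 1 Matrix.PosDef.one)
  have hKdet : IsUnit K.det := hKpos.det_pos.ne'.isUnit
  have hRA : R * A = A * R := by rw [hAdef, mul_add, add_mul, hRN]
  have hKR : K * R = R * K := by
    rw [hK]
    calc (R * A + R * A) * R = R * (A * R) + R * (A * R) := by noncomm_ring
    _ = R * (R * A) + R * (R * A) := by rw [← hRA]
    _ = R * (R * A + R * A) := by noncomm_ring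
  have hKinvR : K⁻¹ * R = R * K⁻¹ := by
    have h1 : K⁻¹ * (K * R) * K⁻¹ = K⁻¹ * (R * K) * K⁻¹ := by rw [hKR]
    rw [← mul_assoc K⁻¹ K R, nonsing_inv_mul K hKdet, one_mul] at h1
    rw [← mul_assoc K⁻¹ R K, mul_assoc (K⁻¹ * R) K K⁻¹] at h1
    rw [mul_nonsing_inv K hKdet, mul_one] at h1
    exact h1.symm
  have hAinv2 : A⁻¹ = (2 : ℝ) • (K⁻¹ * R) := by
    have h5 : K * A⁻¹ = (2 : ℝ) • R := by
      rw [hK, add_mul, mul_assoc, hAAinv, mul_one, two_smul]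
    have h6 : A⁻¹ = K⁻¹ * (K * A⁻¹) := by
      rw [← mul_assoc, nonsing_inv_mul K hKdet, one_mul]
    rw [h6, h5, mul_smul_comm]
  constructor
  · rw [hAinv2]
    exact aux_posdef_smul 2 two_pos _ (aux_posdef_mul K⁻¹ R hKpos.inv hR hKinvR)
  · rw [hinvinv, hAinv, hBdef, hAdef, hNdef, hMdef, smul_smul,
      mul_inv_cancel₀ hl₂.ne', one_smul]
    module
end
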